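/- The Mercator map F : ℝ × S^{n-1} → S^n, F(t,x) = (tanh t, x/cosh t), is a conformal diffeomorphism onto its image: the pullback under F of the round metric on S^n equals (1/cosh²t)·(dt² + g_round), where g_round is the round metric on S^{n-1}. -/

import Mathlib

open scoped RealInnerProductSpace

/-- The Mercator map `F(t,x) = (tanh t, x / cosh t)`. -/
noncomputable def mercator (n : ℕ) :
    ℝ × EuclideanSpace ℝ (Fin n) → EuclideanSpace ℝ (Fin (n + 1)) :=
  fun p => WithLp.toLp 2 (Fin.cons (Real.tanh p.1) (fun i => p.2 i / Real.cosh p.1) :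
    ∀ _ : Fin (n + 1), ℝ)

/-- The Mercator map is conformal: at a point `(t,x)` with `‖x‖ = 1`, its
differential applied to a tangent vector `(s, v)` of `ℝ × S^{n-1}`
(i.e. `v ⟂ x`) has squared norm `(1/cosh²t)·(s² + ‖v‖²)`; that is, the
pullback of the round metric of `S^n` is `(1/cosh²t)(dt² + g_round)`. -/
theorem stmt9 (n : ℕ) (t : ℝ) (x : EuclideanSpace ℝ (Fin n)) (hx : ‖x‖ = 1) :
    ∃ D : ℝ × EuclideanSpace ℝ (Fin n) →L[ℝ] EuclideanSpace ℝ (Fin (n + 1)),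
      HasFDerivAt (mercator n) D (t, x) ∧
      ∀ (s : ℝ) (v : EuclideanSpace ℝ (Fin n)), ⟪x, v⟫ = 0 →
        ‖D (s, v)‖ ^ 2 = (1 / Real.cosh t ^ 2) * (s ^ 2 + ‖v‖ ^ 2) := by
  classical
  have hc : Real.cosh t ≠ 0 := (Real.cosh_pos t).ne'
  -- component derivatives
  let f0' : ℝ × EuclideanSpace ℝ (Fin n) →L[ℝ] ℝ :=
    (1 / Real.cosh t ^ 2) • ContinuousLinearMap.fst ℝ ℝ (EuclideanSpace ℝ (Fin n))
  let fi' : Fin n → (ℝ × EuclideanSpace ℝ (Fin n) →L[ℝ] ℝ) := fun i =>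
    (Real.cosh t)⁻¹ • ((EuclideanSpace.proj i : EuclideanSpace ℝ (Fin n) →L[ℝ] ℝ).comp
        (ContinuousLinearMap.snd ℝ ℝ (EuclideanSpace ℝ (Fin n))))
      - (x i * Real.sinh t / Real.cosh t ^ 2) •
        ContinuousLinearMap.fst ℝ ℝ (EuclideanSpace ℝ (Fin n))
  let e := PiLp.continuousLinearEquiv 2 ℝ (fun _ : Fin (n + 1) => ℝ)
  let D : ℝ × EuclideanSpace ℝ (Fin n) →L[ℝ] EuclideanSpace ℝ (Fin (n + 1)) :=
    (e.symm.toContinuousLinearMap).comp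
      (ContinuousLinearMap.pi (Fin.cons f0' fi'))
  refine ⟨D, ?_, ?_⟩
  · -- derivative
    have hg : HasFDerivAt
        (fun p : ℝ × EuclideanSpace ℝ (Fin n) => (Fin.cons (Real.tanh p.1)
          (fun i => p.2 i / Real.cosh p.1) : ∀ _ : Fin (n + 1), ℝ))
        (ContinuousLinearMap.pi (Fin.cons f0' fi')) (t, x) := by
      apply hasFDerivAt_pi''
      intro i
      refine Fin.cases ?_ ?_ i
      · -- i = 0 : tanh ∘ fst
        have htanh : HasDerivAt Real.tanh (1 / Real.cosh t ^ 2) t := by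
          have hfun : Real.tanh = fun y => Real.sinh y / Real.cosh y :=
            funext fun y => Real.tanh_eq_sinh_div_cosh y
          have h := (Real.hasDerivAt_sinh t).div (Real.hasDerivAt_cosh t) hc
          have heq : (Real.cosh t * Real.cosh t - Real.sinh t * Real.sinh t) /
              Real.cosh t ^ 2 = 1 / Real.cosh t ^ 2 := by
            have := Real.cosh_sq_sub_sinh_sq t
            field_simp
            nlinarith [this]
          rw [heq] at h
          rw [hfun]
          exact h
        have h0 : HasFDerivAt (fun p : ℝ × EuclideanSpace ℝ (Fin n) => Real.tanh p.1)
            ((1 : ℝ →L[ℝ] ℝ).smulRight (1 / Real.cosh t ^ 2) |>.comp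
              (ContinuousLinearMap.fst ℝ ℝ (EuclideanSpace ℝ (Fin n)))) (t, x) :=
          by have := htanh.hasFDerivAt.comp (t, x) (hasFDerivAt_fst (p := (t, x)) (𝕜 := ℝ)); exact this
        simp only [ContinuousLinearMap.proj_pi, Fin.cons_zero]
        refine h0.congr_fderiv ?_
        apply ContinuousLinearMap.ext
        rintro ⟨s, v⟩
        simp [f0']
        ring
      · -- i = succ j
        intro j
        have h1 : HasFDerivAt (fun p : ℝ × EuclideanSpace ℝ (Fin n) => p.2 j)
            ((EuclideanSpace.proj j : EuclideanSpace ℝ (Fin n) →L[ℝ] ℝ).comp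
              (ContinuousLinearMap.snd ℝ ℝ (EuclideanSpace ℝ (Fin n)))) (t, x) :=
          (EuclideanSpace.proj j : EuclideanSpace ℝ (Fin n) →L[ℝ] ℝ).hasFDerivAt.comp
            (t, x) hasFDerivAt_snd
        have h2 : HasDerivAt (fun y => (Real.cosh y)⁻¹)
            (-Real.sinh t / Real.cosh t ^ 2) t :=
          (Real.hasDerivAt_cosh t).inv hc
        have h2' : HasFDerivAt (fun p : ℝ × EuclideanSpace ℝ (Fin n) => (Real.cosh p.1)⁻¹)
            ((1 : ℝ →L[ℝ] ℝ).smulRight (-Real.sinh t / Real.cosh t ^ 2) |>.comp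
              (ContinuousLinearMap.fst ℝ ℝ (EuclideanSpace ℝ (Fin n)))) (t, x) :=
          by have := h2.hasFDerivAt.comp (t, x) (hasFDerivAt_fst (p := (t, x)) (𝕜 := ℝ)); exact this
        have hmul := h1.mul h2'
        simp only [ContinuousLinearMap.proj_pi, Fin.cons_succ]
        have hfun2 : (fun p : ℝ × EuclideanSpace ℝ (Fin n) => p.2 j / Real.cosh p.1)
            = fun p => p.2 j * (Real.cosh p.1)⁻¹ := by
          funext p; rw [div_eq_mul_inv]
        rw [hfun2]
        refine hmul.congr_fderiv ?_
        apply ContinuousLinearMap.ext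
        rintro ⟨s, v⟩
        simp [fi']
        ring
    exact e.symm.toContinuousLinearMap.hasFDerivAt.comp (t, x) hg
  · -- norm computation
    intro s v hxv
    have hD0 : D (s, v) 0 = (1 / Real.cosh t ^ 2) * s := by
      simp [D, e, f0']
    have hDsucc : ∀ j : Fin n,
        D (s, v) j.succ = (Real.cosh t)⁻¹ * v j
          - (x j * Real.sinh t / Real.cosh t ^ 2) * s := by
      intro j
      simp [D, e, fi']
    -- squared-norm as a sum
    have hnorm : ∀ (m : ℕ) (y : EuclideanSpace ℝ (Fin m)),
        ‖y‖ ^ 2 = ∑ i, y i ^ 2 := by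
      intro m y
      rw [EuclideanSpace.norm_eq, Real.sq_sqrt (by positivity)]
      simp [sq_abs]
    have hxsum : ∑ j, x j ^ 2 = 1 := by
      have := hnorm n x
      rw [hx] at this
      simpa using this.symm
    have hvsum : ‖v‖ ^ 2 = ∑ j, v j ^ 2 := hnorm n v
    have hxvsum : ∑ j, x j * v j = 0 := by
      have h : ⟪x, v⟫ = ∑ j, x j * v j := by
        simp [PiLp.inner_apply, RCLike.inner_apply, mul_comm]
      rw [h] at hxv
      exact hxv
    rw [hnorm (n + 1) (D (s, v)), Fin.sum_univ_succ, hD0]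
    have hsum : (∑ j : Fin n, D (s, v) j.succ ^ 2)
        = (Real.cosh t)⁻¹ ^ 2 * (∑ j, v j ^ 2)
          - 2 * (Real.cosh t)⁻¹ * (Real.sinh t * s / Real.cosh t ^ 2) * (∑ j, x j * v j)
          + (Real.sinh t * s / Real.cosh t ^ 2) ^ 2 * (∑ j, x j ^ 2) := by
      rw [Finset.mul_sum, Finset.mul_sum, Finset.mul_sum, ← Finset.sum_sub_distrib,
        ← Finset.sum_add_distrib]
      refine Finset.sum_congr rfl fun j _ => ?_
      rw [hDsucc j]
      ring
    rw [hsum, hxsum, hxvsum, hvsum]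
    have hc2 : Real.cosh t ^ 2 = Real.sinh t ^ 2 + 1 := Real.cosh_sq t
    field_simp
    linear_combination (-s ^ 2) * hc2
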